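/- arXiv:2505.18187 — 2 statements merged into one kernel-verified Lean document; each statement's English description precedes it below -/
import Mathlib

section
/- If the 4×4 block upper triangular matrix Ξ has diagonal blocks A₁, A₂, A₃, A₄ and superdiagonal/corner blocks B₁, B₂, B₃, C₁, C₂, D₁ as in Van Loan's theorem, then for t ≥ 0 the (1,2) block of exp(Ξt) equals G₁(t) = ∫₀ᵗ exp(A₁(t−s)) B₁ exp(A₂ s) ds and the (3,4) block equals G₃(t) = ∫₀ᵗ exp(A₃(t−s)) B₃ exp(A₄ s) ds. -/
open Matrix

namespace VanLoanAux

open NormedSpace intervalIntegral MeasureTheory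

attribute [local instance] Matrix.linftyOpNormedAddCommGroup Matrix.linftyOpNormedSpace
  Matrix.linftyOpNormedRing Matrix.linftyOpNormedAlgebra

set_option linter.unusedSectionVars false

variable {m n : Type*} [Fintype m] [DecidableEq m] [Fintype n] [DecidableEq n]

noncomputable def entryCLM (i : m) (j : n) : Matrix m n ℝ →L[ℝ] ℝ :=
  LinearMap.toContinuousLinearMap
    { toFun := fun M => M i j
      map_add' := fun _ _ => rfl
      map_smul' := fun _ _ => rfl }

lemma hasDerivAt_entry {f : ℝ → Matrix m n ℝ} {f' : Matrix m n ℝ} {t : ℝ}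
    (h : HasDerivAt f f' t) (i : m) (j : n) :
    HasDerivAt (fun s => f s i j) (f' i j) t :=
  (entryCLM i j).hasFDerivAt.comp_hasDerivAt t h

lemma continuous_entry {f : ℝ → Matrix m n ℝ} (hf : Continuous f) (i : m) (j : n) :
    Continuous fun s => f s i j :=
  ((entryCLM i j).continuous.comp hf : _)

lemma ode_unique {N : Type*} [Fintype N] [DecidableEq N] (M : Matrix N N ℝ)
    (Y : ℝ → Matrix N N ℝ)
    (hY : ∀ u (i j : N), HasDerivAt (fun v => Y v i j) ((M * Y u) i j) u) (t : ℝ) :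
    Y t = exp (t • M) * Y 0 := by
  have hE : ∀ u : ℝ, HasDerivAt (fun v : ℝ => exp (v • (-M))) (-M * exp (u • (-M))) u :=
    fun u => hasDerivAt_exp_smul_const' (-M) u
  have hzero : ∀ u (i j : N), HasDerivAt (fun v => (exp (v • (-M)) * Y v) i j) 0 u := by
    intro u i j
    have h1 : HasDerivAt (fun v => ∑ k, exp (v • (-M)) i k * Y v k j)
        (∑ k, ((-M * exp (u • (-M))) i k * Y u k j
          + exp (u • (-M)) i k * (M * Y u) k j)) u :=
      HasDerivAt.fun_sum fun k _ => (hasDerivAt_entry (hE u) i k).mul (hY u k j)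
    have h2 : (∑ k, ((-M * exp (u • (-M))) i k * Y u k j
          + exp (u • (-M)) i k * (M * Y u) k j))
        = ((-M * exp (u • (-M))) * Y u + exp (u • (-M)) * (M * Y u)) i j := by
      simp [Matrix.add_apply, Matrix.mul_apply, Finset.sum_add_distrib]
    have hcomm : exp (u • (-M)) * M = M * exp (u • (-M)) :=
      ((((Commute.refl M).neg_left).smul_left u).exp_left)
    have h3 : (-M * exp (u • (-M))) * Y u + exp (u • (-M)) * (M * Y u) = 0 := by
      rw [← Matrix.mul_assoc, hcomm, Matrix.neg_mul, Matrix.neg_mul, neg_add_cancel]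
    have hfun : (fun v => ∑ k, exp (v • (-M)) i k * Y v k j)
        = fun v => (exp (v • (-M)) * Y v) i j := by
      funext v; rw [Matrix.mul_apply]
    rw [hfun, h2, h3] at h1
    simpa using h1
  have hconst : exp (t • (-M)) * Y t = Y 0 := by
    ext i j
    have := is_const_of_deriv_eq_zero (f := fun v => (exp (v • (-M)) * Y v) i j)
      (fun u => (hzero u i j).differentiableAt) (fun u => (hzero u i j).deriv) t 0
    simpa [exp_zero] using this
  have hc : Commute (t • M) (t • (-M)) := (((Commute.refl M).neg_right).smul_left t).smul_right t
  have hinv : exp (t • M) * exp (t • (-M)) = 1 := by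
    rw [← Matrix.exp_add_of_commute _ _ hc, smul_neg, add_neg_cancel, exp_zero]
  calc Y t = (exp (t • M) * exp (t • (-M))) * Y t := by rw [hinv, Matrix.one_mul]
    _ = exp (t • M) * (exp (t • (-M)) * Y t) := by rw [Matrix.mul_assoc]
    _ = exp (t • M) * Y 0 := by rw [hconst]

lemma vanLoan_block (A : Matrix m m ℝ) (B : Matrix m n ℝ) (D : Matrix n n ℝ) (t : ℝ) :
    exp (t • fromBlocks A B 0 D) =
      fromBlocks (exp (t • A))
        (Matrix.of fun i j => ∫ s in (0:ℝ)..t,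
          (exp ((t - s) • A) * B * exp (s • D)) i j)
        0 (exp (t • D)) := by
  set g : ℝ → Matrix m n ℝ := fun s => exp (-(s • A)) * B * exp (s • D) with hgdef
  have hexpAcont : Continuous fun s : ℝ => exp (-(s • A)) :=
    exp_continuous.comp ((continuous_id.smul continuous_const).neg)
  have hexpDcont : Continuous fun s : ℝ => exp (s • D) :=
    exp_continuous.comp (continuous_id.smul continuous_const)
  have hgcont : Continuous g :=
    (hexpAcont.matrix_mul continuous_const).matrix_mul hexpDcont
  set K : ℝ → Matrix m n ℝ := fun u => Matrix.of fun i j => ∫ s in (0:ℝ)..u, g s i j with hKdef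
  have hKderiv : ∀ u (i : m) (j : n), HasDerivAt (fun v => K v i j) (g u i j) u := by
    intro u i j
    have hgc : Continuous fun s => g s i j := continuous_entry hgcont i j
    exact intervalIntegral.integral_hasDerivAt_right (hgc.intervalIntegrable _ _)
      (hgc.stronglyMeasurable.stronglyMeasurableAtFilter) hgc.continuousAt
  set Y : ℝ → Matrix (m ⊕ n) (m ⊕ n) ℝ := fun u =>
    fromBlocks (exp (u • A)) (exp (u • A) * K u) 0 (exp (u • D)) with hYdef
  have hEA : ∀ u : ℝ, HasDerivAt (fun v : ℝ => exp (v • A)) (A * exp (u • A)) u :=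
    fun u => hasDerivAt_exp_smul_const' A u
  have hED : ∀ u : ℝ, HasDerivAt (fun v : ℝ => exp (v • D)) (D * exp (u • D)) u :=
    fun u => hasDerivAt_exp_smul_const' D u
  have hinvA : ∀ u : ℝ, exp (u • A) * exp (-(u • A)) = 1 := by
    intro u
    rw [← Matrix.exp_add_of_commute _ _ (Commute.refl (u • A)).neg_right, add_neg_cancel, exp_zero]
  have hY : ∀ u (i j : m ⊕ n),
      HasDerivAt (fun v => Y v i j) ((fromBlocks A B 0 D * Y u) i j) u := by
    intro u i j
    have hmul : fromBlocks A B 0 D * Y u =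
        fromBlocks (A * exp (u • A))
          (A * (exp (u • A) * K u) + B * exp (u • D)) 0 (D * exp (u • D)) := by
      rw [hYdef, fromBlocks_multiply]
      simp
    rw [hmul]
    rcases i with i | i <;> rcases j with j | j
    · simpa [hYdef] using hasDerivAt_entry (hEA u) i j
    · -- (1,2) block
      have h1 : HasDerivAt (fun v => ∑ k, exp (v • A) i k * K v k j)
          (∑ k, ((A * exp (u • A)) i k * K u k j + exp (u • A) i k * g u k j)) u :=
        HasDerivAt.fun_sum fun k _ => (hasDerivAt_entry (hEA u) i k).mul (hKderiv u k j)
      have h2 : (∑ k, ((A * exp (u • A)) i k * K u k j + exp (u • A) i k * g u k j))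
          = ((A * exp (u • A)) * K u + exp (u • A) * g u) i j := by
        simp [Matrix.add_apply, Matrix.mul_apply, Finset.sum_add_distrib]
      have h3 : (A * exp (u • A)) * K u + exp (u • A) * g u
          = A * (exp (u • A) * K u) + B * exp (u • D) := by
        rw [Matrix.mul_assoc]
        congr 1
        show exp (u • A) * (exp (-(u • A)) * B * exp (u • D)) = B * exp (u • D)
        rw [← Matrix.mul_assoc, ← Matrix.mul_assoc, hinvA u, Matrix.one_mul]
      have hfun : (fun v => Y v (Sum.inl i) (Sum.inr j))
          = fun v => ∑ k, exp (v • A) i k * K v k j := by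
        funext v; rw [hYdef]; simp [Matrix.mul_apply]
      rw [h2, h3] at h1
      rw [hfun]
      simpa using h1
    · simpa [hYdef] using hasDerivAt_const u (0 : ℝ)
    · simpa [hYdef] using hasDerivAt_entry (hED u) i j
  have hY0 : Y 0 = 1 := by
    have hK0 : K 0 = 0 := by
      ext i j; simp [hKdef]
    rw [hYdef]
    simp [hK0, exp_zero]
  have hfinal := ode_unique (fromBlocks A B 0 D) Y hY t
  rw [hY0, Matrix.mul_one] at hfinal
  have hEsub : ∀ s : ℝ, exp ((t - s) • A) = exp (t • A) * exp (-(s • A)) := by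
    intro s
    rw [sub_smul, sub_eq_add_neg,
      Matrix.exp_add_of_commute _ _ (((Commute.refl A).smul_left t).smul_right s).neg_right]
  have hG : exp (t • A) * K t = (Matrix.of fun i j => ∫ s in (0:ℝ)..t,
      (exp ((t - s) • A) * B * exp (s • D)) i j) := by
    ext i j
    rw [Matrix.mul_apply]
    have hterm : ∀ k : m, exp (t • A) i k * K t k j
        = ∫ s in (0:ℝ)..t, exp (t • A) i k * g s k j := by
      intro k
      rw [hKdef]
      exact (intervalIntegral.integral_const_mul _ _).symm
    rw [Finset.sum_congr rfl fun k _ => hterm k,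
      ← intervalIntegral.integral_finset_sum (fun k _ =>
        (Continuous.intervalIntegrable (by
          exact continuous_const.mul (continuous_entry hgcont k j)) _ _))]
    simp only [Matrix.of_apply]
    refine intervalIntegral.integral_congr fun s _ => ?_
    rw [hEsub s, Matrix.mul_assoc, Matrix.mul_assoc, Matrix.mul_apply]
    congr 1
    funext k
    rw [hgdef]
    simp [Matrix.mul_assoc]
  rw [← hfinal]
  simp only [hYdef]
  rw [hG]

end VanLoanAux

/-- Van Loan's theorem, (1,2) and (3,4) blocks: for the 4×4 block upper triangular `Ξ`,
the (1,2) block of `exp(Ξ t)` is `G₁(t) = ∫₀ᵗ exp(A₁(t−s)) B₁ exp(A₂ s) ds` and the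
(3,4) block is `G₃(t) = ∫₀ᵗ exp(A₃(t−s)) B₃ exp(A₄ s) ds`. -/
theorem vanLoan_G1_G3 {n₁ n₂ n₃ n₄ : ℕ}
    (A₁ : Matrix (Fin n₁) (Fin n₁) ℝ) (A₂ : Matrix (Fin n₂) (Fin n₂) ℝ)
    (A₃ : Matrix (Fin n₃) (Fin n₃) ℝ) (A₄ : Matrix (Fin n₄) (Fin n₄) ℝ)
    (B₁ : Matrix (Fin n₁) (Fin n₂) ℝ) (B₂ : Matrix (Fin n₂) (Fin n₃) ℝ)
    (B₃ : Matrix (Fin n₃) (Fin n₄) ℝ)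
    (C₁ : Matrix (Fin n₁) (Fin n₃) ℝ) (C₂ : Matrix (Fin n₂) (Fin n₄) ℝ)
    (D₁ : Matrix (Fin n₁) (Fin n₄) ℝ) (t : ℝ) (ht : 0 ≤ t) :
    (fun i j => NormedSpace.exp (t • Matrix.fromBlocks
          (Matrix.fromBlocks A₁ B₁ 0 A₂) (Matrix.fromBlocks C₁ D₁ B₂ C₂)
          0 (Matrix.fromBlocks A₃ B₃ 0 A₄))
        (Sum.inl (Sum.inl i)) (Sum.inl (Sum.inr j))) =
      (fun i j => ∫ s in (0:ℝ)..t,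
        (NormedSpace.exp ((t - s) • A₁) * B₁ * NormedSpace.exp (s • A₂)) i j :
        Matrix (Fin n₁) (Fin n₂) ℝ) ∧
    (fun i j => NormedSpace.exp (t • Matrix.fromBlocks
          (Matrix.fromBlocks A₁ B₁ 0 A₂) (Matrix.fromBlocks C₁ D₁ B₂ C₂)
          0 (Matrix.fromBlocks A₃ B₃ 0 A₄))
        (Sum.inr (Sum.inl i)) (Sum.inr (Sum.inr j))) =
      (fun i j => ∫ s in (0:ℝ)..t,
        (NormedSpace.exp ((t - s) • A₃) * B₃ * NormedSpace.exp (s • A₄)) i j :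
        Matrix (Fin n₃) (Fin n₄) ℝ) := by
  have h1 :
      NormedSpace.exp (t • Matrix.fromBlocks
          (Matrix.fromBlocks A₁ B₁ 0 A₂) (Matrix.fromBlocks C₁ D₁ B₂ C₂)
          0 (Matrix.fromBlocks A₃ B₃ 0 A₄)) =
      Matrix.fromBlocks (NormedSpace.exp (t • Matrix.fromBlocks A₁ B₁ 0 A₂))
        (Matrix.of fun i j => ∫ s in (0:ℝ)..t,
          (NormedSpace.exp ((t - s) • Matrix.fromBlocks A₁ B₁ 0 A₂) *
            Matrix.fromBlocks C₁ D₁ B₂ C₂ *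
            NormedSpace.exp (s • Matrix.fromBlocks A₃ B₃ 0 A₄)) i j)
        0 (NormedSpace.exp (t • Matrix.fromBlocks A₃ B₃ 0 A₄)) :=
    VanLoanAux.vanLoan_block _ _ _ t
  have h2 : NormedSpace.exp (t • Matrix.fromBlocks A₁ B₁ 0 A₂) =
      Matrix.fromBlocks (NormedSpace.exp (t • A₁))
        (Matrix.of fun i j => ∫ s in (0:ℝ)..t,
          (NormedSpace.exp ((t - s) • A₁) * B₁ * NormedSpace.exp (s • A₂)) i j)
        0 (NormedSpace.exp (t • A₂)) :=
    VanLoanAux.vanLoan_block _ _ _ t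
  have h3 : NormedSpace.exp (t • Matrix.fromBlocks A₃ B₃ 0 A₄) =
      Matrix.fromBlocks (NormedSpace.exp (t • A₃))
        (Matrix.of fun i j => ∫ s in (0:ℝ)..t,
          (NormedSpace.exp ((t - s) • A₃) * B₃ * NormedSpace.exp (s • A₄)) i j)
        0 (NormedSpace.exp (t • A₄)) :=
    VanLoanAux.vanLoan_block _ _ _ t
  constructor
  · funext i j
    rw [h1, Matrix.fromBlocks_apply₁₁, h2, Matrix.fromBlocks_apply₁₂, Matrix.of_apply]
  · funext i j
    rw [h1, Matrix.fromBlocks_apply₂₂, h3, Matrix.fromBlocks_apply₁₂, Matrix.of_apply]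
end

section
/- With the choices A₁ = A, B₁ = L Q Lᵀ, A₂ = −Aᵀ, A₃ = A, B₃ = B, A₄ = 0 (and C₁, D₁, C₂, B₂ arbitrary, e.g. zero) in the 4×4 block matrix Ξ, the blocks of Υ = exp(Ξ Δt) satisfy: Υ₁₁ = exp(A Δt), Υ₃₄ = ∫₀^{Δt} exp(A(Δt−s)) B ds, and Υ₁₂ Υ₁₁ᵀ = ∫₀^{Δt} exp(A(Δt−s)) L Q Lᵀ exp(Aᵀ(Δt−s)) ds. -/
open Matrix

open NormedSpace intervalIntegral MeasureTheory in
theorem ode_unique' {𝔸 : Type*} [NormedRing 𝔸] [NormedAlgebra ℝ 𝔸] [CompleteSpace 𝔸]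
    (Ξ : 𝔸) (F : ℝ → 𝔸)
    (hF : ∀ t, HasDerivAt F (Ξ * F t) t) (h0 : F 0 = 1) (t : ℝ) :
    F t = NormedSpace.exp (t • Ξ) := by
  have hd : ∀ u : ℝ, HasDerivAt (fun u => exp (u • (-Ξ)) * F u) 0 u := by
    intro u
    have h1 := hasDerivAt_exp_smul_const (𝕂 := ℝ) (-Ξ) u
    have h2 := h1.mul (hF u)
    convert h2 using 1
    · rfl
    rw [mul_neg, neg_mul, mul_assoc, neg_add_cancel]
  have key : exp (t • (-Ξ)) * F t = 1 := by
    have hconst := is_const_of_deriv_eq_zero (f := fun u => exp (u • (-Ξ)) * F u)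
      (fun x => (hd x).differentiableAt) (fun x => (hd x).deriv) t 0
    simpa [h0] using hconst
  have hmul : exp (t • Ξ) * exp (t • (-Ξ)) = 1 := by
    letI : NormedAlgebra ℚ 𝔸 := NormedAlgebra.restrictScalars ℚ ℝ 𝔸
    rw [← NormedSpace.exp_add_of_commute (((Commute.refl Ξ).neg_right.smul_right t).smul_left t)]
    simp [smul_neg]
  calc F t = (exp (t • Ξ) * exp (t • (-Ξ))) * F t := by rw [hmul, one_mul]
    _ = exp (t • Ξ) * (exp (t • (-Ξ)) * F t) := by rw [mul_assoc]
    _ = exp (t • Ξ) := by rw [key, mul_one]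

section Blocks

open NormedSpace intervalIntegral MeasureTheory

variable {a b c : Type*} [Fintype a] [DecidableEq a] [Fintype b] [DecidableEq b]
  [Fintype c] [DecidableEq c]

attribute [local instance] Matrix.linftyOpNormedAddCommGroup Matrix.linftyOpNormedSpace
  Matrix.linftyOpNormedRing Matrix.linftyOpNormedAlgebra

set_option linter.unusedSectionVars false

/-- `fromBlocks` as a continuous linear map. -/
noncomputable def fromBlocksCLM :
    (Matrix a a ℝ × Matrix a b ℝ × Matrix b a ℝ × Matrix b b ℝ) →L[ℝ]
      Matrix (a ⊕ b) (a ⊕ b) ℝ :=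
  LinearMap.toContinuousLinearMap
    { toFun := fun x => fromBlocks x.1 x.2.1 x.2.2.1 x.2.2.2
      map_add' := fun x y => by simp [fromBlocks_add]
      map_smul' := fun c x => by simp [fromBlocks_smul] }

/-- Left multiplication of rectangular matrices as a continuous bilinear map. -/
noncomputable def mulCLM :
    Matrix a a ℝ →L[ℝ] Matrix a b ℝ →L[ℝ] Matrix a b ℝ :=
  LinearMap.toContinuousLinearMap
    { toFun := fun M => LinearMap.toContinuousLinearMap
        { toFun := fun N => M * N
          map_add' := fun N₁ N₂ => Matrix.mul_add M N₁ N₂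
          map_smul' := fun c N => Matrix.mul_smul M c N }
      map_add' := fun M₁ M₂ => by
        ext N i j
        simp [Matrix.add_mul]
      map_smul' := fun c M => by
        ext N i j
        simp [Matrix.smul_mul] }

noncomputable def entryCLM (i : a) (j : b) : Matrix a b ℝ →L[ℝ] ℝ :=
  LinearMap.toContinuousLinearMap
    { toFun := fun M => M i j
      map_add' := fun _ _ => rfl
      map_smul' := fun _ _ => rfl }

noncomputable def mulLeftCLM (M : Matrix a b ℝ) : Matrix b c ℝ →L[ℝ] Matrix a c ℝ :=
  LinearMap.toContinuousLinearMap
    { toFun := fun N => M * N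
      map_add' := fun N₁ N₂ => Matrix.mul_add M N₁ N₂
      map_smul' := fun r N => Matrix.mul_smul M r N }

noncomputable def mulRightCLM (M : Matrix b c ℝ) : Matrix a b ℝ →L[ℝ] Matrix a c ℝ :=
  LinearMap.toContinuousLinearMap
    { toFun := fun N => N * M
      map_add' := fun N₁ N₂ => Matrix.add_mul N₁ N₂ M
      map_smul' := fun r N => Matrix.smul_mul r N M }

theorem intervalIntegral_entry (f : ℝ → Matrix a b ℝ) (hf : Continuous f) (x y : ℝ)
    (i : a) (j : b) : (∫ s in x..y, f s) i j = ∫ s in x..y, f s i j :=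
  ((entryCLM i j).intervalIntegral_comp_comm (hf.intervalIntegrable _ _)).symm

theorem mul_intervalIntegral (M : Matrix a b ℝ) (f : ℝ → Matrix b c ℝ) (hf : Continuous f)
    (x y : ℝ) : M * (∫ s in x..y, f s) = ∫ s in x..y, M * f s :=
  ((mulLeftCLM M).intervalIntegral_comp_comm (hf.intervalIntegrable _ _)).symm

theorem intervalIntegral_mul (M : Matrix b c ℝ) (f : ℝ → Matrix a b ℝ) (hf : Continuous f)
    (x y : ℝ) : (∫ s in x..y, f s) * M = ∫ s in x..y, f s * M :=
  ((mulRightCLM M).intervalIntegral_comp_comm (hf.intervalIntegrable _ _)).symm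

theorem exp_fromBlocks_triangular (X : Matrix a a ℝ) (C : Matrix a b ℝ) (Y : Matrix b b ℝ)
    (t : ℝ) :
    exp (t • fromBlocks X C 0 Y) =
      fromBlocks (exp (t • X))
        (exp (t • X) * ∫ s in (0:ℝ)..t, exp (-(s • X)) * C * exp (s • Y))
        0 (exp (t • Y)) := by
  set φ : ℝ → Matrix a b ℝ := fun s => exp (-(s • X)) * C * exp (s • Y) with hφdef
  have hφ : Continuous φ := by
    apply Continuous.matrix_mul
    · apply Continuous.matrix_mul
      · exact exp_continuous.comp ((continuous_id.smul continuous_const).neg)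
      · exact continuous_const
    · exact exp_continuous.comp (continuous_id.smul continuous_const)
  set G : ℝ → Matrix a b ℝ := fun u => ∫ s in (0:ℝ)..u, φ s with hGdef
  set F : ℝ → Matrix (a ⊕ b) (a ⊕ b) ℝ := fun u =>
    fromBlocks (exp (u • X)) (exp (u • X) * G u) 0 (exp (u • Y)) with hFdef
  have hF : ∀ u : ℝ, HasDerivAt F (fromBlocks X C 0 Y * F u) u := by
    intro u
    have h11 : HasDerivAt (fun u : ℝ => exp (u • X)) (X * exp (u • X)) u :=
      hasDerivAt_exp_smul_const' X u
    have h22 : HasDerivAt (fun u : ℝ => exp (u • Y)) (Y * exp (u • Y)) u :=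
      hasDerivAt_exp_smul_const' Y u
    haveI : TopologicalSpace.PseudoMetrizableSpace (Matrix a b ℝ) :=
      inferInstanceAs (TopologicalSpace.PseudoMetrizableSpace (a → b → ℝ))
    have hG : HasDerivAt G (φ u) u :=
      integral_hasDerivAt_right (hφ.intervalIntegrable _ _)
        (hφ.stronglyMeasurableAtFilter _ _) hφ.continuousAt
    have hone : exp (u • X) * exp (-(u • X)) = 1 := by
      rw [← Matrix.exp_add_of_commute _ _ (((Commute.refl X).smul_left u).smul_right u).neg_right]
      simp
    have hEφ : exp (u • X) * φ u = C * exp (u • Y) := by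
      rw [hφdef]
      dsimp only
      rw [← Matrix.mul_assoc, ← Matrix.mul_assoc, hone, Matrix.one_mul]
    have h12 : HasDerivAt (fun u : ℝ => exp (u • X) * G u)
        (X * (exp (u • X) * G u) + C * exp (u • Y)) u := by
      have hB := mulCLM.hasDerivAt_of_bilinear (fun _ => h11) (fun _ => hG)
      have heq : (mulCLM (exp (u • X)) (φ u) + mulCLM (X * exp (u • X)) (G u)
          : Matrix a b ℝ) = X * (exp (u • X) * G u) + C * exp (u • Y) := by
        show exp (u • X) * φ u + X * exp (u • X) * G u = _
        rw [hEφ, Matrix.mul_assoc, add_comm]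
      exact hB.congr_deriv heq
    have h21 : HasDerivAt (fun _ : ℝ => (0 : Matrix b a ℝ)) 0 u := hasDerivAt_const _ _
    have htuple := h11.prodMk (h12.prodMk (h21.prodMk h22))
    have hcomp := (fromBlocksCLM.hasFDerivAt).comp_hasDerivAt u htuple
    have hblocks : (fromBlocksCLM
          (X * exp (u • X), X * (exp (u • X) * G u) + C * exp (u • Y), 0,
            Y * exp (u • Y)) : Matrix (a ⊕ b) (a ⊕ b) ℝ) = fromBlocks X C 0 Y * F u := by
      show fromBlocks (X * exp (u • X)) _ _ _ = _
      rw [hFdef]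
      dsimp only
      rw [fromBlocks_multiply]
      simp
    exact hcomp.congr_deriv hblocks
  have h0 : F 0 = 1 := by
    rw [hFdef]
    dsimp only
    rw [hGdef]
    simp [fromBlocks_one]
  exact (ode_unique' _ F hF h0 t).symm

/-- With `Ξ = [[A, LQLᵀ, 0, 0], [0, −Aᵀ, 0, 0], [0, 0, A, B], [0, 0, 0, 0]]` and
`Υ = exp(Ξ Δt)`, the discrete-time matrices are obtained as `Υ₁₁ = exp(A Δt)`,
`Υ₃₄ = ∫₀^{Δt} exp(A(Δt−s)) B ds`, and
`Υ₁₂ Υ₁₁ᵀ = ∫₀^{Δt} exp(A(Δt−s)) L Q Lᵀ exp(Aᵀ(Δt−s)) ds`. -/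
theorem vanLoan_discretization {n m p : ℕ} (A : Matrix (Fin n) (Fin n) ℝ)
    (B : Matrix (Fin n) (Fin p) ℝ) (L : Matrix (Fin n) (Fin m) ℝ)
    (Q : Matrix (Fin m) (Fin m) ℝ) (Δt : ℝ) (hΔt : 0 ≤ Δt) :
    ∀ Υ : Matrix ((Fin n ⊕ Fin n) ⊕ (Fin n ⊕ Fin p)) ((Fin n ⊕ Fin n) ⊕ (Fin n ⊕ Fin p)) ℝ,
      Υ = NormedSpace.exp (Δt • Matrix.fromBlocks
          (Matrix.fromBlocks A (L * Q * Lᵀ) 0 (-Aᵀ)) 0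
          0 (Matrix.fromBlocks A B 0 (0 : Matrix (Fin p) (Fin p) ℝ))) →
      (fun i j => Υ (Sum.inl (Sum.inl i)) (Sum.inl (Sum.inl j))) =
        NormedSpace.exp (Δt • A) ∧
      (fun i j => Υ (Sum.inr (Sum.inl i)) (Sum.inr (Sum.inr j))) =
        (fun i j => ∫ s in (0:ℝ)..Δt, (NormedSpace.exp ((Δt - s) • A) * B) i j :
          Matrix (Fin n) (Fin p) ℝ) ∧
      (Matrix.of fun i j => Υ (Sum.inl (Sum.inl i)) (Sum.inl (Sum.inr j))) *
          (NormedSpace.exp (Δt • A))ᵀ =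
        (fun i j => ∫ s in (0:ℝ)..Δt,
          (NormedSpace.exp ((Δt - s) • A) * (L * Q * Lᵀ) *
            NormedSpace.exp ((Δt - s) • Aᵀ)) i j) := by
  intro Υ hΥ
  -- abbreviations
  set C : Matrix (Fin n) (Fin n) ℝ := L * Q * Lᵀ with hC
  -- commuting exponential products
  have hEP : ∀ s : ℝ, exp (Δt • A) * exp (-(s • A)) = exp ((Δt - s) • A) := by
    intro s
    rw [← Matrix.exp_add_of_commute _ _ (((Commute.refl A).smul_left Δt).smul_right s).neg_right]
    congr 1
    module
  have hQE : ∀ s : ℝ, exp (s • (-Aᵀ)) * exp (Δt • Aᵀ) = exp ((Δt - s) • Aᵀ) := by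
    intro s
    have hcomm : Commute (s • (-Aᵀ)) (Δt • Aᵀ) :=
      (((Commute.refl Aᵀ).neg_left.smul_left s).smul_right Δt)
    rw [← Matrix.exp_add_of_commute _ _ hcomm]
    congr 1
    module
  -- continuity facts
  have hφ1 : Continuous fun s : ℝ => exp (-(s • A)) * C * exp (s • (-Aᵀ)) := by
    apply Continuous.matrix_mul
    · apply Continuous.matrix_mul
      · exact exp_continuous.comp ((continuous_id.smul continuous_const).neg)
      · exact continuous_const
    · exact exp_continuous.comp (continuous_id.smul continuous_const)
  have hφ2 : Continuous fun s : ℝ => exp (-(s • A)) * B := by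
    apply Continuous.matrix_mul
    · exact exp_continuous.comp ((continuous_id.smul continuous_const).neg)
    · exact continuous_const
  -- decompose the big exponential
  have hbig : Υ = fromBlocks (exp (Δt • fromBlocks A C 0 (-Aᵀ))) 0 0
      (exp (Δt • fromBlocks A B 0 (0 : Matrix (Fin p) (Fin p) ℝ))) := by
    rw [hΥ, exp_fromBlocks_triangular]
    simp
  have h1 := exp_fromBlocks_triangular A C (-Aᵀ) Δt
  have h2 := exp_fromBlocks_triangular A B (0 : Matrix (Fin p) (Fin p) ℝ) Δt
  refine ⟨?_, ?_, ?_⟩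
  · funext i j
    rw [hbig]
    simp only [fromBlocks_apply₁₁]
    rw [h1]
    simp only [fromBlocks_apply₁₁]
  · funext i j
    rw [hbig]
    simp only [fromBlocks_apply₂₂]
    rw [h2]
    simp only [fromBlocks_apply₁₂, smul_zero, exp_zero, Matrix.mul_one]
    rw [mul_intervalIntegral _ _ hφ2, intervalIntegral_entry _ (continuous_const.matrix_mul hφ2)]
    refine intervalIntegral.integral_congr fun s _ => ?_
    rw [← Matrix.mul_assoc, hEP s]
  · have hof : (Matrix.of fun i j => Υ (Sum.inl (Sum.inl i)) (Sum.inl (Sum.inr j))) =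
        exp (Δt • A) * ∫ s in (0:ℝ)..Δt, exp (-(s • A)) * C * exp (s • (-Aᵀ)) := by
      ext i j
      rw [Matrix.of_apply, hbig]
      simp only [fromBlocks_apply₁₁]
      rw [h1]
      simp only [fromBlocks_apply₁₂]
    have hT : (exp (Δt • A))ᵀ = exp (Δt • Aᵀ) := by
      rw [← Matrix.exp_transpose, Matrix.transpose_smul]
    rw [hof, hT, mul_intervalIntegral _ _ hφ1,
      intervalIntegral_mul _ _ (continuous_const.matrix_mul hφ1)]
    funext i j
    rw [intervalIntegral_entry _
      ((continuous_const.matrix_mul hφ1).matrix_mul continuous_const)]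
    refine intervalIntegral.integral_congr fun s _ => ?_
    have : exp (Δt • A) * (exp (-(s • A)) * C * exp (s • (-Aᵀ))) * exp (Δt • Aᵀ)
        = exp ((Δt - s) • A) * C * exp ((Δt - s) • Aᵀ) := by
      rw [← hEP s, ← hQE s]
      simp only [Matrix.mul_assoc]
    rw [this]

end Blocks
end
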